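/- Normalising constant for the Gaussian model with normal-Gamma initial prior (Equation 18): Let N₀ be a positive natural number, y₀₁, …, y₀N₀ ∈ ℝ with mean ȳ = N₀^{−1} Σ y₀ᵢ, let α₀, β₀, κ₀ > 0, μ₀ ∈ ℝ and a₀ ≥ 0. Define αₙ = α₀ + a₀N₀/2, κₙ = κ₀ + a₀N₀, and βₙ = β₀ + (1/2)( a₀ Σ_{i=1}^{N₀} (y₀ᵢ − ȳ)² + κ₀ a₀ N₀ (ȳ − μ₀)²/κₙ ). Then ∫_0^∞ ∫_{−∞}^{∞} ( ∏_{i=1}^{N₀} √(τ/(2π)) e^{−τ (y₀ᵢ−μ)²/2} )^{a₀} · √(κ₀τ/(2π)) e^{−κ₀τ(μ−μ₀)²/2} · (β₀^{α₀}/Γ(α₀)) τ^{α₀−1} e^{−β₀τ} dμ dτ = (Γ(αₙ)/Γ(α₀)) · (β₀^{α₀}/βₙ^{αₙ}) · (κ₀/κₙ)^{1/2} · (2π)^{−a₀N₀/2}. -/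

import Mathlib

set_option maxHeartbeats 1000000


open MeasureTheory Real

/-- Normalising constant for the Gaussian model with normal-Gamma initial prior
(Equation 18): with `ȳ` the sample mean, `αₙ = α₀ + a₀N₀/2`, `κₙ = κ₀ + a₀N₀`,
`βₙ = β₀ + (a₀ Σᵢ (y₀ᵢ − ȳ)² + κ₀ a₀ N₀ (ȳ − μ₀)²/κₙ)/2`, the double integral
of the tempered Gaussian likelihood against the normal-Gamma prior equals
`(Γ(αₙ)/Γ(α₀)) (β₀^{α₀}/βₙ^{αₙ}) (κ₀/κₙ)^{1/2} (2π)^{−a₀N₀/2}`. -/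
theorem power_prior_gaussian_normalising_constant
    (N₀ : ℕ) (hN₀ : 0 < N₀) (y : Fin N₀ → ℝ)
    (α₀ β₀ κ₀ : ℝ) (hα₀ : 0 < α₀) (hβ₀ : 0 < β₀) (hκ₀ : 0 < κ₀)
    (μ₀ : ℝ) (a₀ : ℝ) (ha₀ : 0 ≤ a₀)
    (ybar : ℝ) (hybar : ybar = (∑ i, y i) / (N₀ : ℝ))
    (αn κn βn : ℝ)
    (hαn : αn = α₀ + a₀ * N₀ / 2)
    (hκn : κn = κ₀ + a₀ * N₀)
    (hβn : βn = β₀ + (a₀ * ∑ i, (y i - ybar) ^ 2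
      + κ₀ * a₀ * N₀ * (ybar - μ₀) ^ 2 / κn) / 2) :
    ∫ τ in Set.Ioi (0 : ℝ), ∫ μ : ℝ,
        (∏ i, Real.sqrt (τ / (2 * π)) * Real.exp (-τ * (y i - μ) ^ 2 / 2)) ^ a₀
          * (Real.sqrt (κ₀ * τ / (2 * π))
              * Real.exp (-κ₀ * τ * (μ - μ₀) ^ 2 / 2))
          * ((β₀ ^ α₀ / Real.Gamma α₀) * τ ^ (α₀ - 1) * Real.exp (-β₀ * τ))
      = (Real.Gamma αn / Real.Gamma α₀) * (β₀ ^ α₀ / βn ^ αn)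
          * (κ₀ / κn) ^ ((1 : ℝ) / 2)
          * (2 * π) ^ (-(a₀ * N₀) / 2) := by
  have hπ : (0:ℝ) < π := pi_pos
  have h2π : (0:ℝ) < 2 * π := by positivity
  have hNpos : (0:ℝ) < (N₀ : ℝ) := by exact_mod_cast hN₀
  have hκnpos : 0 < κn := by rw [hκn]; positivity
  have hαnpos : 0 < αn := by rw [hαn]; positivity
  set S : ℝ := ∑ i, (y i - ybar) ^ 2 with hS
  have hSnn : 0 ≤ S := Finset.sum_nonneg fun i _ => sq_nonneg _
  have hβnpos : 0 < βn := by
    have t1 : 0 ≤ a₀ * S := by positivity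
    have t2 : 0 ≤ κ₀ * a₀ * N₀ * (ybar - μ₀) ^ 2 / κn :=
      div_nonneg (by positivity) hκnpos.le
    rw [hβn]; linarith
  have hΓ : Real.Gamma α₀ ≠ 0 := (Real.Gamma_pos_of_pos hα₀).ne'
  set m : ℝ := (a₀ * N₀ * ybar + κ₀ * μ₀) / κn with hm
  -- sum decomposition
  have hsum0 : ∑ i, (y i - ybar) = 0 := by
    rw [Finset.sum_sub_distrib, Finset.sum_const, hybar]
    simp
    field_simp
    ring
  have hsum : ∀ μ : ℝ, ∑ i, (y i - μ) ^ 2 = S + N₀ * (μ - ybar) ^ 2 := by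
    intro μ
    have h1 : ∀ i ∈ Finset.univ, (y i - μ) ^ 2
        = (y i - ybar) ^ 2 + (2 * (ybar - μ)) * (y i - ybar) + (ybar - μ) ^ 2 :=
      fun i _ => by ring
    rw [Finset.sum_congr rfl h1, Finset.sum_add_distrib, Finset.sum_add_distrib,
      ← Finset.mul_sum, hsum0, Finset.sum_const, Finset.card_univ, Fintype.card_fin,
      nsmul_eq_mul]
    ring
  -- completing the square
  have hquad : ∀ μ : ℝ,
      a₀ * (S + N₀ * (μ - ybar) ^ 2) + κ₀ * (μ - μ₀) ^ 2
        = κn * (μ - m) ^ 2 + 2 * (βn - β₀) := by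
    intro μ
    have hβ' : 2 * (βn - β₀) = a₀ * S + κ₀ * a₀ * N₀ * (ybar - μ₀) ^ 2 / κn := by
      rw [hβn]; ring
    rw [hβ', hm, hκn]
    have hk : κ₀ + a₀ * (N₀:ℝ) ≠ 0 := by rw [← hκn]; exact hκnpos.ne'
    field_simp
    ring
  -- inner integral
  have key : ∀ τ ∈ Set.Ioi (0:ℝ),
      (∫ μ : ℝ,
        (∏ i, Real.sqrt (τ / (2 * π)) * Real.exp (-τ * (y i - μ) ^ 2 / 2)) ^ a₀
          * (Real.sqrt (κ₀ * τ / (2 * π))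
              * Real.exp (-κ₀ * τ * (μ - μ₀) ^ 2 / 2))
          * ((β₀ ^ α₀ / Real.Gamma α₀) * τ ^ (α₀ - 1) * Real.exp (-β₀ * τ)))
      = ((κ₀ / κn) ^ ((1:ℝ)/2) * (2 * π) ^ (-(a₀ * N₀) / 2) * (β₀ ^ α₀ / Real.Gamma α₀))
          * (τ ^ (αn - 1) * Real.exp (-(βn * τ))) := by
    intro τ hτ
    rw [Set.mem_Ioi] at hτ
    set b : ℝ := κn * τ / 2 with hb
    have hbpos : 0 < b := by positivity
    set C : ℝ := (2 * π) ^ (-(a₀ * N₀) / 2) * τ ^ (a₀ * N₀ / 2)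
        * Real.sqrt (κ₀ * τ / (2 * π)) * (β₀ ^ α₀ / Real.Gamma α₀) * τ ^ (α₀ - 1)
        * Real.exp (-(βn * τ)) with hC
    have hpoint : ∀ μ : ℝ,
        (∏ i, Real.sqrt (τ / (2 * π)) * Real.exp (-τ * (y i - μ) ^ 2 / 2)) ^ a₀
          * (Real.sqrt (κ₀ * τ / (2 * π))
              * Real.exp (-κ₀ * τ * (μ - μ₀) ^ 2 / 2))
          * ((β₀ ^ α₀ / Real.Gamma α₀) * τ ^ (α₀ - 1) * Real.exp (-β₀ * τ))
        = C * Real.exp (-b * (μ - m) ^ 2) := by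
      intro μ
      rw [Finset.prod_mul_distrib, Finset.prod_const, ← Real.exp_sum]
      have hE : ∑ i, -τ * (y i - μ) ^ 2 / 2 = -τ / 2 * (S + N₀ * (μ - ybar) ^ 2) := by
        rw [Finset.sum_congr rfl
          (fun i _ => by ring : ∀ i ∈ Finset.univ,
            -τ * (y i - μ) ^ 2 / 2 = -τ / 2 * (y i - μ) ^ 2),
          ← Finset.mul_sum, hsum μ]
      rw [hE, Finset.card_univ, Fintype.card_fin, Real.mul_rpow (by positivity) (Real.exp_nonneg _),
        ← Real.rpow_natCast (Real.sqrt (τ / (2 * π))) N₀,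
        ← Real.rpow_mul (Real.sqrt_nonneg _), Real.sqrt_eq_rpow,
        ← Real.rpow_mul (by positivity : (0:ℝ) ≤ τ / (2 * π)),
        Real.div_rpow hτ.le h2π.le, ← Real.exp_mul]
      have hexp : Real.exp (-τ / 2 * (S + N₀ * (μ - ybar) ^ 2) * a₀)
          * Real.exp (-κ₀ * τ * (μ - μ₀) ^ 2 / 2) * Real.exp (-β₀ * τ)
          = Real.exp (-b * (μ - m) ^ 2) * Real.exp (-(βn * τ)) := by
        rw [← Real.exp_add, ← Real.exp_add, ← Real.exp_add]
        congr 1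
        have h := hquad μ
        rw [hb]
        linear_combination (-(τ/2)) * h
      have hepow : ((2:ℝ) * π) ^ (-(a₀ * N₀) / 2)
          = (((2:ℝ) * π) ^ (1 / 2 * ((N₀:ℝ) * a₀)))⁻¹ := by
        rw [← Real.rpow_neg h2π.le]
        congr 1
        ring
      calc τ ^ (1 / 2 * ((N₀:ℝ) * a₀)) / (2 * π) ^ (1 / 2 * ((N₀:ℝ) * a₀))
            * Real.exp (-τ / 2 * (S + ↑N₀ * (μ - ybar) ^ 2) * a₀)
            * (Real.sqrt (κ₀ * τ / (2 * π)) * Real.exp (-κ₀ * τ * (μ - μ₀) ^ 2 / 2))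
            * (β₀ ^ α₀ / Real.Gamma α₀ * τ ^ (α₀ - 1) * Real.exp (-β₀ * τ))
          = τ ^ (1 / 2 * ((N₀:ℝ) * a₀)) / (2 * π) ^ (1 / 2 * ((N₀:ℝ) * a₀))
            * Real.sqrt (κ₀ * τ / (2 * π)) * (β₀ ^ α₀ / Real.Gamma α₀) * τ ^ (α₀ - 1)
            * (Real.exp (-τ / 2 * (S + ↑N₀ * (μ - ybar) ^ 2) * a₀)
              * Real.exp (-κ₀ * τ * (μ - μ₀) ^ 2 / 2) * Real.exp (-β₀ * τ)) := by ring
        _ = τ ^ (1 / 2 * ((N₀:ℝ) * a₀)) / (2 * π) ^ (1 / 2 * ((N₀:ℝ) * a₀))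
            * Real.sqrt (κ₀ * τ / (2 * π)) * (β₀ ^ α₀ / Real.Gamma α₀) * τ ^ (α₀ - 1)
            * (Real.exp (-b * (μ - m) ^ 2) * Real.exp (-(βn * τ))) := by rw [hexp]
        _ = C * Real.exp (-b * (μ - m) ^ 2) := by
            rw [hC, hepow]
            have hτe : τ ^ (a₀ * (N₀:ℝ) / 2) = τ ^ (1 / 2 * ((N₀:ℝ) * a₀)) := by
              congr 1; ring
            rw [hτe]
            ring
    have h1 : (∫ μ : ℝ,
        (∏ i, Real.sqrt (τ / (2 * π)) * Real.exp (-τ * (y i - μ) ^ 2 / 2)) ^ a₀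
          * (Real.sqrt (κ₀ * τ / (2 * π))
              * Real.exp (-κ₀ * τ * (μ - μ₀) ^ 2 / 2))
          * ((β₀ ^ α₀ / Real.Gamma α₀) * τ ^ (α₀ - 1) * Real.exp (-β₀ * τ)))
        = ∫ μ : ℝ, C * Real.exp (-b * (μ - m) ^ 2) :=
      integral_congr_ae (Filter.Eventually.of_forall hpoint)
    rw [h1, MeasureTheory.integral_const_mul,
      show (∫ x : ℝ, Real.exp (-b * (x - m) ^ 2)) = ∫ x : ℝ, Real.exp (-b * x ^ 2) from
        integral_sub_right_eq_self (fun x => Real.exp (-b * x ^ 2)) m,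
      integral_gaussian]
    -- now C * √(π/b) = target
    rw [hC, hb]
    have hsq : Real.sqrt (κ₀ * τ / (2 * π)) * Real.sqrt (π / (κn * τ / 2))
        = (κ₀ / κn) ^ ((1:ℝ)/2) := by
      rw [← Real.sqrt_mul (by positivity),
        show κ₀ * τ / (2 * π) * (π / (κn * τ / 2)) = κ₀ / κn by
          field_simp,
        Real.sqrt_eq_rpow]
    have hτ2 : τ ^ (a₀ * (N₀:ℝ) / 2) * τ ^ (α₀ - 1) = τ ^ (αn - 1) := by
      rw [← Real.rpow_add hτ, hαn]
      congr 1; ring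
    calc (2 * π) ^ (-(a₀ * ↑N₀) / 2) * τ ^ (a₀ * ↑N₀ / 2) * Real.sqrt (κ₀ * τ / (2 * π))
          * (β₀ ^ α₀ / Real.Gamma α₀) * τ ^ (α₀ - 1) * Real.exp (-(βn * τ))
          * Real.sqrt (π / (κn * τ / 2))
        = (Real.sqrt (κ₀ * τ / (2 * π)) * Real.sqrt (π / (κn * τ / 2)))
          * (2 * π) ^ (-(a₀ * ↑N₀) / 2) * (β₀ ^ α₀ / Real.Gamma α₀)
          * (τ ^ (a₀ * ↑N₀ / 2) * τ ^ (α₀ - 1)) * Real.exp (-(βn * τ)) := by ring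
      _ = (κ₀ / κn) ^ ((1:ℝ)/2) * (2 * π) ^ (-(a₀ * ↑N₀) / 2)
          * (β₀ ^ α₀ / Real.Gamma α₀) * (τ ^ (αn - 1) * Real.exp (-(βn * τ))) := by
          rw [hsq, hτ2]; ring
  rw [setIntegral_congr_fun measurableSet_Ioi key, MeasureTheory.integral_const_mul,
    Real.integral_rpow_mul_exp_neg_mul_Ioi hαnpos hβnpos]
  rw [Real.div_rpow zero_le_one hβnpos.le, Real.one_rpow]
  field_simp
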